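/- Let μ ∈ ℝ and σ > 0, and define f : ℝ → [0,1] by f(x) = σ²/(2((x−μ)₊)²) if (x−μ)/σ ≥ 1 and f(x) = (1 + ((x−μ)₊)²/σ²)^{-1} if (x−μ)/σ < 1 (equivalently, f = min{(2E₀)^{-1}, P₀} with E₀(x) = ((x−μ)₊)²/σ² and P₀(x) = (1+E₀(x))^{-1}). Then: (i) for every Q ∈ H_S(μ,σ) and every α ∈ (0,1), Q({x : f(x) ≤ α}) ≤ α; and (ii) for every α ∈ (0,1/2], sup_{Q∈H_S(μ,σ)} Q({x : f(x) ≤ α}) = α, attained by the three-point measure giving mass α to each of μ ± σ(2α)^{-1/2} and mass 1−2α to μ. That is, f is a semi-precise p-variable for H_S(μ,σ). -/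

import Mathlib

open MeasureTheory Set
open scoped ENNReal

/-- Mean of a distribution on ℝ. -/
noncomputable def distMean (Q : Measure ℝ) : ℝ := ∫ x, x ∂Q

/-- Variance of a distribution on ℝ. -/
noncomputable def distVar (Q : Measure ℝ) : ℝ := ∫ x, (x - distMean Q)^2 ∂Q

/-- `H(μ,σ)`: Borel probability measures on ℝ with finite second moment,
mean at most `μ`, and variance at most `σ²`. -/
def MemH (μ σ : ℝ) (Q : Measure ℝ) : Prop :=
  IsProbabilityMeasure Q ∧ Integrable (fun x => x^2) Q ∧
    distMean Q ≤ μ ∧ distVar Q ≤ σ^2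

/-- A distribution `Q` with mean `m` is symmetric if
`Q((-∞, m−x]) = Q([m+x, ∞))` for all `x`. -/
def IsSymmetricDist (Q : Measure ℝ) : Prop :=
  ∀ x : ℝ, Q (Iic (distMean Q - x)) = Q (Ici (distMean Q + x))

/-- `f = min{(2E₀)⁻¹, P₀}`: equals `σ²/(2((x−μ)₊)²)` when `(x−μ)/σ ≥ 1` and
`(1 + ((x−μ)₊)²/σ²)⁻¹` otherwise. -/
noncomputable def pS (μ σ : ℝ) (x : ℝ) : ℝ :=
  if 1 ≤ (x - μ) / σ then σ^2 / (2 * (max (x - μ) 0)^2)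
  else (1 + (max (x - μ) 0)^2 / σ^2)⁻¹

/-- The three-point measure giving mass `α` to each of `μ ± σ(2α)^{-1/2}`
and mass `1 − 2α` to `μ`. -/
noncomputable def threePointQ (μ σ α : ℝ) : Measure ℝ :=
  ENNReal.ofReal α • Measure.dirac (μ + σ / Real.sqrt (2 * α)) +
    ENNReal.ofReal α • Measure.dirac (μ - σ / Real.sqrt (2 * α)) +
    ENNReal.ofReal (1 - 2 * α) • Measure.dirac μ

/- ## Auxiliary lemmas -/

lemma integrable_dirac'' {f : ℝ → ℝ} (hf : Measurable f) (a : ℝ) :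
    Integrable f (Measure.dirac a) := by
  refine ⟨hf.aestronglyMeasurable, ?_⟩
  simp [HasFiniteIntegral, lintegral_dirac]

lemma integrable_threePointQ {f : ℝ → ℝ} (hf : Measurable f) (μ σ α : ℝ) :
    Integrable f (threePointQ μ σ α) := by
  unfold threePointQ
  refine Integrable.add_measure (Integrable.add_measure ?_ ?_) ?_ <;>
    exact (integrable_dirac'' hf _).smul_measure ENNReal.ofReal_ne_top

lemma integral_threePointQ {μ σ α : ℝ} (hα : 0 ≤ α) (hα2 : 2*α ≤ 1) {f : ℝ → ℝ}
    (hf : Measurable f) :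
    ∫ x, f x ∂(threePointQ μ σ α) =
      α * f (μ + σ / Real.sqrt (2*α)) + α * f (μ - σ / Real.sqrt (2*α)) + (1-2*α) * f μ := by
  unfold threePointQ
  rw [integral_add_measure (Integrable.add_measure
        ((integrable_dirac'' hf _).smul_measure ENNReal.ofReal_ne_top)
        ((integrable_dirac'' hf _).smul_measure ENNReal.ofReal_ne_top))
      ((integrable_dirac'' hf _).smul_measure ENNReal.ofReal_ne_top),
    integral_add_measure ((integrable_dirac'' hf _).smul_measure ENNReal.ofReal_ne_top)
      ((integrable_dirac'' hf _).smul_measure ENNReal.ofReal_ne_top),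
    integral_smul_measure, integral_smul_measure, integral_smul_measure,
    integral_dirac, integral_dirac, integral_dirac,
    ENNReal.toReal_ofReal hα, ENNReal.toReal_ofReal (by linarith : (0:ℝ) ≤ 1 - 2*α)]
  simp [smul_eq_mul]

lemma threePointQ_apply (μ σ α : ℝ) (s : Set ℝ) :
    threePointQ μ σ α s = ENNReal.ofReal α * s.indicator 1 (μ + σ / Real.sqrt (2*α))
      + ENNReal.ofReal α * s.indicator 1 (μ - σ / Real.sqrt (2*α))
      + ENNReal.ofReal (1-2*α) * s.indicator 1 μ := by
  simp [threePointQ, Measure.add_apply, Measure.smul_apply, Measure.dirac_apply, smul_eq_mul]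

lemma pS_set_eq {μ σ α : ℝ} (hσ : 0 < σ) (hα : 0 < α) (hα2 : α ≤ 1/2) :
    {x | pS μ σ x ≤ α} = Ici (μ + σ / Real.sqrt (2*α)) := by
  have h2α : (0:ℝ) < 2*α := by linarith
  have hs : 0 < Real.sqrt (2*α) := Real.sqrt_pos.mpr h2α
  have hssq : (Real.sqrt (2*α))^2 = 2*α := Real.sq_sqrt h2α.le
  set c := σ / Real.sqrt (2*α) with hc
  have hc0 : 0 < c := div_pos hσ hs
  have hs1 : Real.sqrt (2*α) ≤ 1 := by
    rw [show (1:ℝ) = Real.sqrt 1 by simp]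
    exact Real.sqrt_le_sqrt (by linarith)
  have hcσ : σ ≤ c := by
    rw [hc, le_div_iff₀ hs]
    nlinarith
  have hcsq : c^2 = σ^2 / (2*α) := by
    rw [hc, div_pow, hssq]
  ext x
  simp only [mem_setOf_eq, mem_Ici, pS]
  constructor
  · intro hx
    by_cases h1 : 1 ≤ (x - μ) / σ
    · rw [if_pos h1] at hx
      have hxm : σ ≤ x - μ := by
        have := (one_le_div hσ).mp h1; linarith
      have hmax : max (x - μ) 0 = x - μ := max_eq_left (by linarith)
      rw [hmax] at hx
      have hpos : (0:ℝ) < 2 * (x - μ)^2 := by nlinarith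
      have h3 : σ^2 ≤ α * (2 * (x - μ)^2) := (div_le_iff₀ hpos).mp hx
      have h4 : c^2 ≤ (x - μ)^2 := by
        rw [hcsq, div_le_iff₀ h2α]; nlinarith
      nlinarith
    · rw [if_neg h1] at hx
      exfalso
      have hxm : x - μ < σ := by
        by_contra h
        exact h1 ((one_le_div hσ).mpr (by linarith))
      have hmax : max (x - μ) 0 < σ := max_lt hxm hσ
      have hmax0 : 0 ≤ max (x - μ) 0 := le_max_right _ _
      have hq : (max (x - μ) 0)^2 / σ^2 < 1 := by
        rw [div_lt_one (by positivity)]; nlinarith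
      have hpos : (0:ℝ) < 1 + (max (x - μ) 0)^2 / σ^2 := by positivity
      have := mul_le_mul_of_nonneg_right hx hpos.le
      rw [inv_mul_cancel₀ hpos.ne'] at this
      nlinarith
  · intro hx
    have hxm : σ ≤ x - μ := by linarith
    have h1 : 1 ≤ (x - μ) / σ := (one_le_div hσ).mpr hxm
    rw [if_pos h1, max_eq_left (by linarith)]
    have hpos : (0:ℝ) < 2 * (x - μ)^2 := by nlinarith
    rw [div_le_iff₀ hpos]
    have h4 : c^2 ≤ (x - μ)^2 := by nlinarith
    rw [hcsq] at h4
    have := (div_le_iff₀ h2α).mp h4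
    nlinarith

lemma pS_subset2 {μ σ α : ℝ} (hσ : 0 < σ) (hα : 1/2 < α) (hα1 : α < 1) :
    {x | pS μ σ x ≤ α} ⊆ Ici (μ + σ * Real.sqrt ((1-α)/α)) := by
  have hα0 : (0:ℝ) < α := by linarith
  have hq0 : (0:ℝ) ≤ (1-α)/α := div_nonneg (by linarith) hα0.le
  set d := σ * Real.sqrt ((1-α)/α) with hd
  have hdsq : d^2 = σ^2 * ((1-α)/α) := by
    rw [hd, mul_pow, Real.sq_sqrt hq0]
  have hd0 : 0 ≤ d := by positivity
  have hdσ : d ≤ σ := by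
    have h1 : (1-α)/α ≤ 1 := by rw [div_le_one hα0]; linarith
    have := Real.sqrt_le_sqrt h1
    rw [Real.sqrt_one] at this
    nlinarith [Real.sqrt_nonneg ((1-α)/α)]
  intro x hx
  simp only [mem_setOf_eq, pS] at hx
  simp only [mem_Ici]
  by_cases h1 : 1 ≤ (x - μ) / σ
  · have := (one_le_div hσ).mp h1; linarith
  · rw [if_neg h1] at hx
    set t := max (x - μ) 0 with ht
    have ht0 : 0 ≤ t := le_max_right _ _
    have hpos : (0:ℝ) < 1 + t^2 / σ^2 := by positivity
    have h2 := mul_le_mul_of_nonneg_right hx hpos.le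
    rw [inv_mul_cancel₀ hpos.ne'] at h2
    have h3 : d^2 ≤ t^2 := by
      rw [hdsq]
      have h4 : σ^2 * (1-α) ≤ α * t^2 := by
        have h5 : σ^2 ≤ α * (σ^2 + t^2) := by
          have hσ2 : (0:ℝ) < σ^2 := by positivity
          have := mul_le_mul_of_nonneg_right h2 hσ2.le
          calc σ^2 = 1 * σ^2 := (one_mul _).symm
            _ ≤ α * (1 + t^2/σ^2) * σ^2 := this
            _ = α * (σ^2 + t^2) := by field_simp; try ring
        nlinarith
      have heq : σ^2 * ((1-α)/α) = (σ^2*(1-α))/α := by ring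
      rw [heq, div_le_iff₀ hα0]
      nlinarith
    have hdt : d ≤ t := by nlinarith
    rcases le_or_gt (x - μ) 0 with h | h
    · exfalso
      have ht' : t = 0 := max_eq_right h
      rw [ht'] at hx
      norm_num at hx
      linarith
    · have : t = x - μ := max_eq_left h.le
      rw [this] at hdt; linarith

lemma sym_bound (Q : Measure ℝ) [IsProbabilityMeasure Q] (h2 : Integrable (fun x => x^2) Q)
    (hsym : IsSymmetricDist Q) {σ t : ℝ} (hvar : distVar Q ≤ σ^2) (ht : 0 < t) :
    (Q (Ici (distMean Q + t))).toReal ≤ min (1/2) (σ^2/(2*t^2)) := by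
  set m := distMean Q with hm
  have hx1 : Integrable (fun x => x) Q := by
    refine Integrable.mono' (g := fun x => 1 + x^2) (integrable_const 1 |>.add h2)
      measurable_id.aestronglyMeasurable (ae_of_all _ fun x => ?_)
    simp only [Real.norm_eq_abs, id]
    nlinarith [abs_nonneg x, sq_abs x, sq_nonneg (|x| - 1)]
  have hq : Integrable (fun x => (x - m)^2) Q := by
    have h : Integrable (fun x => x^2 - (2*m)*x + m^2) Q :=
      (h2.sub (hx1.const_mul (2*m))).add (integrable_const _)
    exact h.congr (Filter.Eventually.of_forall fun x => by ring)
  have hcheb := mul_meas_ge_le_integral_of_nonneg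
    (ae_of_all Q fun x => sq_nonneg (x - m)) hq (t^2)
  have hvar' : ∫ x, (x - m)^2 ∂Q ≤ σ^2 := hvar
  set A := Ici (m + t) with hA
  set B := Iic (m - t) with hB
  have hAB : Q A = Q B := (hsym t).symm
  have hdisj : Disjoint B A := by
    rw [Set.disjoint_left]
    intro x hx hx'
    simp only [hB, hA, mem_Iic, mem_Ici] at hx hx'
    linarith
  have hU : Q (B ∪ A) = Q B + Q A := measure_union hdisj measurableSet_Ici
  have hsub : B ∪ A ⊆ {x | t^2 ≤ (x - m)^2} := by
    intro x hx
    simp only [mem_setOf_eq]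
    rcases hx with hx | hx
    · simp only [hB, mem_Iic] at hx; nlinarith
    · simp only [hA, mem_Ici] at hx; nlinarith
  have hne : Q {x | t^2 ≤ (x - m)^2} ≠ ⊤ := measure_ne_top Q _
  have h1 : Q B + Q A ≤ 1 := by
    rw [← hU]
    exact (measure_mono (subset_univ _)).trans measure_univ.le
  have h2' : Q B + Q A ≤ Q {x | t^2 ≤ (x - m)^2} := by
    rw [← hU]; exact measure_mono hsub
  have htr : (Q B + Q A).toReal = (Q A).toReal + (Q A).toReal := by
    rw [ENNReal.toReal_add (measure_ne_top _ _) (measure_ne_top _ _), hAB]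
  have hb1 : (Q A).toReal + (Q A).toReal ≤ 1 := by
    rw [← htr]
    simpa using ENNReal.toReal_mono (by simp) h1
  have hb2 : (Q A).toReal + (Q A).toReal ≤ (Q {x | t^2 ≤ (x - m)^2}).toReal := by
    rw [← htr]
    exact ENNReal.toReal_mono hne h2'
  have ht2 : (0:ℝ) < t^2 := by positivity
  have hb3 : (Q {x | t^2 ≤ (x - m)^2}).toReal ≤ σ^2 / t^2 := by
    rw [le_div_iff₀ ht2]
    have hcheb : t^2 * (Q {x | t^2 ≤ (x - m)^2}).toReal ≤ ∫ x, (x - m)^2 ∂Q := hcheb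
    nlinarith [hcheb]
  refine le_min (by linarith) ?_
  rw [le_div_iff₀ (by positivity : (0:ℝ) < 2*t^2)]
  nlinarith [mul_le_mul_of_nonneg_right hb2 ht2.le, div_mul_cancel₀ (σ^2) ht2.ne', mul_le_mul_of_nonneg_right hb3 ht2.le]

/-- `pS μ σ` is a semi-precise p-variable for `H_S(μ,σ)`:
(i) valid for all `α ∈ (0,1)`; (ii) for `α ∈ (0,1/2]` the sup of
`Q({pS ≤ α})` over `H_S(μ,σ)` equals `α`, attained by the three-point measure. -/
theorem stmt_9 (μ σ : ℝ) (hσ : 0 < σ) :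
    (∀ Q : Measure ℝ, MemH μ σ Q → IsSymmetricDist Q → ∀ α ∈ Ioo (0:ℝ) 1,
      (Q {x | pS μ σ x ≤ α}).toReal ≤ α) ∧
    (∀ α ∈ Ioc (0:ℝ) (1/2),
      (MemH μ σ (threePointQ μ σ α) ∧ IsSymmetricDist (threePointQ μ σ α) ∧
        ((threePointQ μ σ α) {x | pS μ σ x ≤ α}).toReal = α) ∧
      IsLUB {r : ℝ | ∃ Q : Measure ℝ, MemH μ σ Q ∧ IsSymmetricDist Q ∧
        r = (Q {x | pS μ σ x ≤ α}).toReal} α) := by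
  have part1 : ∀ Q : Measure ℝ, MemH μ σ Q → IsSymmetricDist Q → ∀ α ∈ Ioo (0:ℝ) 1,
      (Q {x | pS μ σ x ≤ α}).toReal ≤ α := by
    rintro Q ⟨hP, h2, hmean, hvarle⟩ hsym α ⟨hα0, hα1⟩
    haveI := hP
    by_cases hhalf : α ≤ 1/2
    · have h2α : (0:ℝ) < 2*α := by linarith
      have hs : 0 < Real.sqrt (2*α) := Real.sqrt_pos.mpr h2α
      have hssq : (Real.sqrt (2*α))^2 = 2*α := Real.sq_sqrt h2α.le
      have hc0 : 0 < σ / Real.sqrt (2*α) := div_pos hσ hs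
      have hcsq : (σ / Real.sqrt (2*α))^2 = σ^2/(2*α) := by rw [div_pow, hssq]
      have hsub : {x | pS μ σ x ≤ α} ⊆ Ici (distMean Q + σ / Real.sqrt (2*α)) := by
        rw [pS_set_eq hσ hα0 hhalf]
        exact Ici_subset_Ici.mpr (by linarith)
      have hb := sym_bound Q h2 hsym hvarle hc0
      have hmono := ENNReal.toReal_mono (measure_ne_top Q _) (measure_mono hsub)
      have heq : σ^2/(2*(σ / Real.sqrt (2*α))^2) = α := by
        rw [hcsq]; field_simp
      calc (Q {x | pS μ σ x ≤ α}).toReal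
          ≤ (Q (Ici (distMean Q + σ / Real.sqrt (2*α)))).toReal := hmono
        _ ≤ min (1/2) (σ^2/(2*(σ / Real.sqrt (2*α))^2)) := hb
        _ ≤ σ^2/(2*(σ / Real.sqrt (2*α))^2) := min_le_right _ _
        _ = α := heq
    · push_neg at hhalf
      have hd0 : 0 < σ * Real.sqrt ((1-α)/α) :=
        mul_pos hσ (Real.sqrt_pos.mpr (div_pos (by linarith) (by linarith)))
      have hsub : {x | pS μ σ x ≤ α} ⊆ Ici (distMean Q + σ * Real.sqrt ((1-α)/α)) :=
        (pS_subset2 hσ hhalf hα1).trans (Ici_subset_Ici.mpr (by linarith))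
      have hb := sym_bound Q h2 hsym hvarle hd0
      calc (Q {x | pS μ σ x ≤ α}).toReal
          ≤ (Q (Ici (distMean Q + σ * Real.sqrt ((1-α)/α)))).toReal :=
            ENNReal.toReal_mono (measure_ne_top Q _) (measure_mono hsub)
        _ ≤ min (1/2) (σ^2/(2*(σ * Real.sqrt ((1-α)/α))^2)) := hb
        _ ≤ 1/2 := min_le_left _ _
        _ ≤ α := hhalf.le
  refine ⟨part1, ?_⟩
  rintro α ⟨hα0, hα2⟩
  have h2α : (0:ℝ) < 2*α := by linarith
  have hs : 0 < Real.sqrt (2*α) := Real.sqrt_pos.mpr h2α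
  have hssq : (Real.sqrt (2*α))^2 = 2*α := Real.sq_sqrt h2α.le
  have hc0 : 0 < σ / Real.sqrt (2*α) := div_pos hσ hs
  have hcsq : (σ / Real.sqrt (2*α))^2 = σ^2/(2*α) := by rw [div_pow, hssq]
  have h12 : (0:ℝ) ≤ 1 - 2*α := by linarith
  have huniv : threePointQ μ σ α univ = 1 := by
    rw [threePointQ_apply]
    simp only [indicator_univ, Pi.one_apply, mul_one]
    rw [← ENNReal.ofReal_add hα0.le hα0.le, ← ENNReal.ofReal_add (by linarith) h12,
      show α + α + (1 - 2*α) = 1 by ring, ENNReal.ofReal_one]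
  haveI hP : IsProbabilityMeasure (threePointQ μ σ α) := ⟨huniv⟩
  have hint2 : Integrable (fun x => x^2) (threePointQ μ σ α) :=
    integrable_threePointQ (by fun_prop) μ σ α
  have hmean : distMean (threePointQ μ σ α) = μ := by
    rw [distMean, integral_threePointQ hα0.le (by linarith) (f := fun x => x) (by fun_prop)]
    ring
  have hvar : distVar (threePointQ μ σ α) = σ^2 := by
    rw [distVar, hmean,
      integral_threePointQ hα0.le (by linarith) (by fun_prop : Measurable fun x : ℝ => (x - μ)^2)]
    have e1 : μ + σ / Real.sqrt (2*α) - μ = σ / Real.sqrt (2*α) := by ring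
    have e2 : μ - σ / Real.sqrt (2*α) - μ = -(σ / Real.sqrt (2*α)) := by ring
    rw [e1, e2, show (-(σ / Real.sqrt (2*α)))^2 = (σ / Real.sqrt (2*α))^2 by ring, hcsq]
    field_simp
    ring
  have hsym3 : IsSymmetricDist (threePointQ μ σ α) := by
    intro x
    rw [hmean, threePointQ_apply, threePointQ_apply]
    have c1 : (μ + σ / Real.sqrt (2*α) ≤ μ - x) ↔ (x ≤ -(σ / Real.sqrt (2*α))) := by
      constructor <;> intro h <;> linarith
    have c2 : (μ - σ / Real.sqrt (2*α) ≤ μ - x) ↔ (x ≤ σ / Real.sqrt (2*α)) := by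
      constructor <;> intro h <;> linarith
    have c3 : (μ ≤ μ - x) ↔ (x ≤ 0) := by constructor <;> intro h <;> linarith
    have c4 : (μ + x ≤ μ + σ / Real.sqrt (2*α)) ↔ (x ≤ σ / Real.sqrt (2*α)) := by
      constructor <;> intro h <;> linarith
    have c5 : (μ + x ≤ μ - σ / Real.sqrt (2*α)) ↔ (x ≤ -(σ / Real.sqrt (2*α))) := by
      constructor <;> intro h <;> linarith
    have c6 : (μ + x ≤ μ) ↔ (x ≤ 0) := by constructor <;> intro h <;> linarith
    simp only [indicator_apply, mem_Iic, mem_Ici, Pi.one_apply, c1, c2, c3, c4, c5, c6]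
    ring
  have hset : {x | pS μ σ x ≤ α} = Ici (μ + σ / Real.sqrt (2*α)) := pS_set_eq hσ hα0 hα2
  have happ : threePointQ μ σ α {x | pS μ σ x ≤ α} = ENNReal.ofReal α := by
    rw [hset, threePointQ_apply]
    have n1 : μ + σ / Real.sqrt (2*α) ∈ Ici (μ + σ / Real.sqrt (2*α)) := mem_Ici.mpr (le_refl _)
    have n2 : μ - σ / Real.sqrt (2*α) ∉ Ici (μ + σ / Real.sqrt (2*α)) := by
      simp only [mem_Ici, not_le]; linarith
    have n3 : μ ∉ Ici (μ + σ / Real.sqrt (2*α)) := by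
      simp only [mem_Ici, not_le]; linarith
    rw [indicator_of_mem n1, indicator_of_notMem n2, indicator_of_notMem n3]
    simp
  have htoReal : (threePointQ μ σ α {x | pS μ σ x ≤ α}).toReal = α := by
    rw [happ, ENNReal.toReal_ofReal hα0.le]
  have hmemH : MemH μ σ (threePointQ μ σ α) := ⟨hP, hint2, hmean.le, hvar.le⟩
  refine ⟨⟨hmemH, hsym3, htoReal⟩, ?_⟩
  apply IsGreatest.isLUB
  constructor
  · exact ⟨threePointQ μ σ α, hmemH, hsym3, htoReal.symm⟩
  · rintro r ⟨Q, hQ, hsymQ, rfl⟩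
    exact part1 Q hQ hsymQ α ⟨hα0, by linarith⟩
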